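/- Let A_k be a k-atom constructed in k steps, where a_i ≥ 1 vertices are added at step i (so a_1 = 1 and the independent set added at step i+1 has size a_{i+1}). Then the largest adjacency eigenvalue of A_k satisfies λ₁(A_k) ≥ (2/k) Σ_{1 ≤ i < j ≤ k} √(a_i/a_j). -/

import Mathlib

/-- `IsKAtomList k G l` : the graph `G` is a `k`-atom admitting a recursive
construction in `k` steps in which the list `l` records the number of vertices
added at each step (so `l` has length `k`, starts with `1`, and sums to the
number of vertices of `G`). -/
inductive IsKAtomList : (k : ℕ) → {V : Type} → SimpleGraph V → List ℕ → Prop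
  | base {V : Type} (G : SimpleGraph V) (h1 : Nonempty V) (h2 : Subsingleton V) :
      IsKAtomList 1 G [1]
  | step {V : Type} (G : SimpleGraph V) (k : ℕ) (A : Set V) (l : List ℕ)
      (hA : IsKAtomList k (G.induce A) l)
      (hI : ∀ u v : V, u ∉ A → v ∉ A → ¬ G.Adj u v)
      (hone : ∀ a ∈ A, ∃! b : V, b ∉ A ∧ G.Adj a b)
      (hcov : ∀ b : V, b ∉ A → ∃ a ∈ A, G.Adj a b) :
      IsKAtomList (k + 1) G (l ++ [(Aᶜ : Set V).ncard])

open scoped Matrix in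
/-- `lambda1 G` : the largest eigenvalue of the adjacency matrix of `G`. -/
noncomputable def lambda1 {V : Type} [Fintype V] (G : SimpleGraph V) : ℝ :=
  letI := Classical.decRel G.Adj
  sSup {x : ℝ | ∃ v : V → ℝ, v ≠ 0 ∧ G.adjMatrix ℝ *ᵥ v = x • v}

/-- `pairSum k a = ∑_{i < j} √(a i / a j)`. -/
noncomputable def pairSum (k : ℕ) (a : Fin k → ℝ) : ℝ :=
  ∑ p ∈ Finset.univ.filter (fun p : Fin k × Fin k => p.1 < p.2),
    Real.sqrt (a p.1 / a p.2)

lemma atom_pos {k : ℕ} {V : Type} {G : SimpleGraph V} {l : List ℕ}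
    (h : IsKAtomList k G l) : 0 < k := by cases h <;> omega

lemma atom_struct : ∀ (k : ℕ) {V : Type} (G : SimpleGraph V) (l : List ℕ),
    IsKAtomList k G l →
    l.length = k ∧ ∃ f : V → Fin k,
      (∀ i : Fin k, Nat.card {v : V // f v = i} = l.getD i 0) ∧
      (∀ v : V, ∀ j : Fin k, f v < j → ∃ u : V, f u = j ∧ G.Adj v u) := by
  intro k
  induction k with
  | zero => intro V G l h; exact absurd (atom_pos h) (by omega)
  | succ k IH =>
    intro V G l h
    cases h with
    | base G h1 h2 =>
      refine ⟨rfl, fun _ => 0, fun i => ?_, fun v j hj => ?_⟩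
      · have hi : i = 0 := by
          have := i.isLt; exact Fin.ext (by omega)
        subst hi
        have e : {v : V // (0 : Fin (0+1)) = 0} ≃ V := Equiv.subtypeUnivEquiv fun _ => rfl
        refine ((Nat.card_congr e).trans ?_ : Nat.card {v : V // (0 : Fin (0+1)) = 0} = _)
        simpa using Nat.card_eq_one_iff_unique.mpr ⟨h2, h1⟩
      · have h1 := j.isLt
        simp only [Fin.lt_def] at hj
        exact absurd hj (by omega)
    | step G k' A l' hA hI hone hcov =>
      obtain ⟨hlen, f', hcard, hadj⟩ := IH (G.induce A) l' hA
      classical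
      set f : V → Fin (k + 1) := fun v =>
        if hv : v ∈ A then (f' ⟨v, hv⟩).castSucc else Fin.last k with hf
      have hfA : ∀ (v : V) (hv : v ∈ A), f v = (f' ⟨v, hv⟩).castSucc := fun v hv => dif_pos hv
      have hfnA : ∀ v : V, v ∉ A → f v = Fin.last k := fun v hv => dif_neg hv
      have hmem : ∀ v : V, f v ≠ Fin.last k → v ∈ A := by
        intro v hv
        by_contra hvA
        exact hv (hfnA v hvA)
      refine ⟨by simp [hlen], f, fun i => ?_, fun v j hj => ?_⟩
      · induction i using Fin.lastCases with
        | last =>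
          have e : {v : V // f v = Fin.last k} ≃ ↥(Aᶜ) := by
            refine Equiv.subtypeEquivRight fun v => ⟨fun hv => ?_, fun hv => hfnA v hv⟩
            · intro hvA
              rw [hfA v hvA] at hv
              exact absurd hv (Fin.ne_of_lt (Fin.castSucc_lt_last _))
          rw [Nat.card_congr e, Nat.card_coe_set_eq]
          have hco : ((Fin.last k : Fin (k+1)) : ℕ) = l'.length := by simp [hlen]
          rw [hco, List.getD_append_right l' _ 0 _ le_rfl]
          simp
        | cast i =>
          have hne : ∀ x : {v : V // f v = i.castSucc}, f x.1 ≠ Fin.last k := by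
            intro x
            rw [x.2]; exact Fin.ne_of_lt (Fin.castSucc_lt_last _)
          have e : {v : V // f v = i.castSucc} ≃ {u : ↥A // f' u = i} := by
            refine ⟨fun x => ⟨⟨x.1, hmem x.1 (hne x)⟩, ?_⟩, fun u => ⟨u.1.1, ?_⟩,
              fun x => rfl, fun u => rfl⟩
            · have hx := x.2
              rw [hfA x.1 (hmem x.1 (hne x))] at hx
              exact Fin.castSucc_injective _ hx
            · rw [hfA u.1.1 u.1.2]
              exact congrArg Fin.castSucc u.2
          rw [Nat.card_congr e, hcard i]
          have hilt : (i : ℕ) < l'.length := by rw [hlen]; exact i.isLt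
          rw [show ((i.castSucc : Fin (k+1)) : ℕ) = (i : ℕ) from rfl,
            List.getD_append l' _ 0 _ hilt]
      · have hvA : v ∈ A := by
          apply hmem
          intro hlast
          rw [hlast] at hj
          exact absurd hj (not_lt.mpr (Fin.le_last j))
        rw [hfA v hvA] at hj
        induction j using Fin.lastCases with
        | last =>
          obtain ⟨b, ⟨hbA, hbadj⟩, -⟩ := hone v hvA
          exact ⟨b, hfnA b hbA, hbadj⟩
        | cast j =>
          have hj' : f' ⟨v, hvA⟩ < j := by
            simpa [Fin.castSucc_lt_castSucc_iff] using hj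
          obtain ⟨u, hu1, hu2⟩ := hadj ⟨v, hvA⟩ j hj'
          refine ⟨u.1, ?_, hu2⟩
          rw [hfA u.1 u.2]
          exact congrArg Fin.castSucc hu1

open Matrix in
lemma rayleigh_le_lambda1 {V : Type} [Fintype V] [DecidableEq V] [Nonempty V]
    (G : SimpleGraph V) [DecidableRel G.Adj] (x : EuclideanSpace ℝ V) (hx : x ≠ 0) :
    (inner ℝ (Matrix.toEuclideanLin (G.adjMatrix ℝ) x) x : ℝ) / ‖x‖ ^ 2 ≤ lambda1 G := by
  classical
  set M : Matrix V V ℝ := G.adjMatrix ℝ with hMdef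
  have hMM : M = @SimpleGraph.adjMatrix ℝ V G (Classical.decRel G.Adj) _ _ := by
    ext i j
    by_cases hadj : G.Adj i j <;> simp [hMdef, SimpleGraph.adjMatrix_apply, hadj]
  have hM : M.IsHermitian := by
    show Mᴴ = M
    ext i j
    by_cases hadj : G.Adj j i
    · simp [hMdef, Matrix.conjTranspose_apply, SimpleGraph.adjMatrix_apply, hadj, hadj.symm]
    · have hadj' : ¬ G.Adj i j := fun hc => hadj hc.symm
      simp [hMdef, Matrix.conjTranspose_apply, SimpleGraph.adjMatrix_apply, hadj, hadj']
  set T : EuclideanSpace ℝ V →ₗ[ℝ] EuclideanSpace ℝ V := Matrix.toEuclideanLin M with hTdef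
  have hsymm : T.IsSymmetric := Matrix.isHermitian_iff_isSymmetric.mp hM
  haveI : Nontrivial (EuclideanSpace ℝ V) := by
    refine ⟨0, (WithLp.equiv 2 (V → ℝ)).symm (fun _ => 1), fun hc => ?_⟩
    have := congrFun (congrArg (WithLp.equiv 2 (V → ℝ)) hc) (Classical.arbitrary V)
    simpa using this
  set T' : EuclideanSpace ℝ V →L[ℝ] EuclideanSpace ℝ V := LinearMap.toContinuousLinearMap T
    with hT'def
  have hTT' : ∀ y, T y = T' y := fun y => rfl
  set μ : ℝ := ⨆ y : { y : EuclideanSpace ℝ V // y ≠ 0 },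
    RCLike.re (inner ℝ (T y.1) y.1 : ℝ) / ‖(y : EuclideanSpace ℝ V)‖ ^ 2 with hμ
  have hEig : Module.End.HasEigenvalue T μ := by
    have := hsymm.hasEigenvalue_iSup_of_finiteDimensional
    rw [hμ]
    simpa using this
  -- the set in lambda1
  set S : Set ℝ := {c : ℝ | ∃ v : V → ℝ, v ≠ 0 ∧ M *ᵥ v = c • v} with hS
  have hlam : lambda1 G = sSup S := by
    rw [lambda1, hS, ← hMM]
  -- μ ∈ S
  have hμS : μ ∈ S := by
    obtain ⟨v, hv⟩ := hEig.exists_hasEigenvector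
    refine ⟨WithLp.equiv 2 (V → ℝ) v, ?_, ?_⟩
    · intro hc
      apply hv.2
      ext i
      exact congrFun hc i
    · have := Module.End.mem_eigenspace_iff.mp hv.1
      have h2 : WithLp.equiv 2 (V → ℝ) (T v) = M *ᵥ (WithLp.equiv 2 (V → ℝ) v) := rfl
      rw [this] at h2
      rw [← h2]
      rfl
  -- S is bounded above by ‖T'‖
  have hbdd : ∀ c ∈ S, c ≤ ‖T'‖ := by
    rintro c ⟨v, hv, hveq⟩
    set w : EuclideanSpace ℝ V := (WithLp.equiv 2 (V → ℝ)).symm v with hw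
    have hw0 : w ≠ 0 := by
      intro hc
      apply hv
      ext i
      exact congrFun (congrArg (WithLp.equiv 2 (V → ℝ)) hc) i
    have hTw : T' w = c • w := by
      rw [← hTT']
      apply (WithLp.equiv 2 (V → ℝ)).injective
      exact hveq
    have h1 : ‖T' w‖ ≤ ‖T'‖ * ‖w‖ := T'.le_opNorm w
    rw [hTw, norm_smul] at h1
    have hwpos : 0 < ‖w‖ := norm_pos_iff.mpr hw0
    have : |c| ≤ ‖T'‖ := by
      have := (mul_le_mul_iff_of_pos_right hwpos).mp h1
      simpa using this
    exact le_trans (le_abs_self c) this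
  have hBddS : BddAbove S := ⟨‖T'‖, fun c hc => hbdd c hc⟩
  -- rayleigh quotients bounded
  have hray_bdd : BddAbove (Set.range fun y : { y : EuclideanSpace ℝ V // y ≠ 0 } =>
      RCLike.re (inner ℝ (T y.1) y.1 : ℝ) / ‖(y : EuclideanSpace ℝ V)‖ ^ 2) := by
    refine ⟨‖T'‖, ?_⟩
    rintro r ⟨y, rfl⟩
    have hy : 0 < ‖(y : EuclideanSpace ℝ V)‖ := norm_pos_iff.mpr y.2
    have h1 : (inner ℝ (T y.1) y.1 : ℝ) ≤ ‖T'‖ * ‖(y : EuclideanSpace ℝ V)‖ ^ 2 := by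
      calc (inner ℝ (T y.1) y.1 : ℝ) ≤ |(inner ℝ (T y.1) y.1 : ℝ)| := le_abs_self _
        _ ≤ ‖T y.1‖ * ‖(y : EuclideanSpace ℝ V)‖ := abs_real_inner_le_norm _ _
        _ ≤ (‖T'‖ * ‖(y : EuclideanSpace ℝ V)‖) * ‖(y : EuclideanSpace ℝ V)‖ := by
            apply mul_le_mul_of_nonneg_right _ (norm_nonneg _)
            rw [hTT']
            exact T'.le_opNorm _
        _ = ‖T'‖ * ‖(y : EuclideanSpace ℝ V)‖ ^ 2 := by ring
    simp only [RCLike.re_to_real]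
    rw [div_le_iff₀ (by positivity)]
    simpa using h1
  have hle : (inner ℝ (T x) x : ℝ) / ‖x‖ ^ 2 ≤ μ := by
    have := le_ciSup hray_bdd ⟨x, hx⟩
    rw [hμ]
    simpa using this
  rw [hlam]
  exact le_trans hle (le_csSup hBddS hμS)

open scoped Matrix

/-- If the `k`-atom `G` is constructed in `k` steps, `a i ≥ 1` vertices being added
at step `i`, then `λ₁(G) ≥ (2 / k) ∑_{i < j} √(a i / a j)`. -/
theorem lambda1_atom_ge_pairSum (k : ℕ) {V : Type} [Fintype V]
    (G : SimpleGraph V) (a : Fin k → ℕ) (ha : ∀ i, 1 ≤ a i)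
    (h : IsKAtomList k G (List.ofFn a)) :
    (2 / (k : ℝ)) * pairSum k (fun i => (a i : ℝ)) ≤ lambda1 G := by
  classical
  have hk : 0 < k := atom_pos h
  obtain ⟨hlen, f, hcard, hadj⟩ := atom_struct k G (List.ofFn a) h
  have hcard' : ∀ i : Fin k, (Finset.univ.filter fun v : V => f v = i).card = a i := by
    intro i
    have h2 := hcard i
    rw [show (List.ofFn a).getD (i : ℕ) 0 = a i by simp [List.getD_eq_getElem?_getD]] at h2
    rw [← h2, Nat.card_eq_fintype_card, Fintype.card_subtype]
  have key : ∃ x : EuclideanSpace ℝ V, x ≠ 0 ∧ ‖x‖ ^ 2 = (k : ℝ) ∧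
      2 * pairSum k (fun i => (a i : ℝ)) ≤
        (inner ℝ (Matrix.toEuclideanLin (G.adjMatrix ℝ) x) x : ℝ) := by
      classical
      have hapos : ∀ i : Fin k, (0:ℝ) < a i := fun i => by
        have := ha i; positivity
      set c : Fin k → ℝ := fun i => (Real.sqrt (a i))⁻¹ with hc
      have hcpos : ∀ i, 0 < c i := fun i => inv_pos.mpr (Real.sqrt_pos.mpr (hapos i))
      set x0 : V → ℝ := fun v => c (f v) with hx0
      set x : EuclideanSpace ℝ V := (WithLp.equiv 2 (V → ℝ)).symm x0 with hx
      haveI : Nonempty V := by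
        have h0 := hcard' ⟨0, hk⟩
        have h1 := ha ⟨0, hk⟩
        obtain ⟨v, -⟩ := Finset.card_pos.mp (show 0 < (Finset.univ.filter
          fun v : V => f v = ⟨0, hk⟩).card by omega)
        exact ⟨v⟩
      have hxne : x ≠ 0 := by
        intro hcon
        have := congrFun (congrArg (WithLp.equiv 2 (V → ℝ)) hcon) (Classical.arbitrary V)
        exact absurd this (ne_of_gt (hcpos _))
      -- fiberwise sums
      have hfib : ∀ g : Fin k → ℝ, ∑ v : V, g (f v) = ∑ i : Fin k, (a i : ℝ) * g i := by
        intro g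
        rw [← Finset.sum_fiberwise Finset.univ f (fun v => g (f v))]
        refine Finset.sum_congr rfl fun i _ => ?_
        have hgi : ∑ v ∈ Finset.univ.filter (fun v => f v = i), g (f v)
            = ∑ v ∈ Finset.univ.filter (fun v => f v = i), g i :=
          Finset.sum_congr rfl fun v hv => by rw [(Finset.mem_filter.mp hv).2]
        rw [hgi, Finset.sum_const, hcard' i, nsmul_eq_mul]
      -- norm
      have hnorm : ‖x‖ ^ 2 = (k : ℝ) := by
        rw [← real_inner_self_eq_norm_sq, PiLp.inner_apply]
        simp only [RCLike.inner_apply, conj_trivial]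
        have h1 : ∑ v : V, x v * x v = ∑ v : V, (fun i => ((a i : ℝ))⁻¹) (f v) := by
          refine Finset.sum_congr rfl fun v _ => ?_
          show c (f v) * c (f v) = ((a (f v) : ℝ))⁻¹
          rw [hc]
          show (Real.sqrt (a (f v)))⁻¹ * (Real.sqrt (a (f v)))⁻¹ = _
          rw [← mul_inv, Real.mul_self_sqrt (le_of_lt (hapos _))]
        have h2 := hfib (fun i => ((a i : ℝ))⁻¹)
        rw [h1, h2]
        have h3 : ∀ i : Fin k, (a i : ℝ) * ((a i : ℝ))⁻¹ = 1 := fun i =>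
          mul_inv_cancel₀ (ne_of_gt (hapos i))
        simp [h3]
      refine ⟨x, hxne, hnorm, ?_⟩
      -- inner product as double sum
      set M : Matrix V V ℝ := G.adjMatrix ℝ with hM
      have hMsymm : ∀ u v : V, M u v = M v u := by
        intro u v
        by_cases hadj2 : G.Adj u v
        · simp [hM, SimpleGraph.adjMatrix_apply, hadj2, hadj2.symm]
        · have : ¬ G.Adj v u := fun hcon => hadj2 hcon.symm
          simp [hM, SimpleGraph.adjMatrix_apply, hadj2, this]
      have hM0 : ∀ u v : V, 0 ≤ M u v := by
        intro u v
        by_cases hadj2 : G.Adj u v <;> simp [hM, SimpleGraph.adjMatrix_apply, hadj2]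
      set F : V × V → ℝ := fun p => M p.1 p.2 * x0 p.2 * x0 p.1 with hF
      have hF0 : ∀ p : V × V, 0 ≤ F p := fun p => by
        have h1 := hM0 p.1 p.2
        have h2 := le_of_lt (hcpos (f p.1))
        have h3 := le_of_lt (hcpos (f p.2))
        positivity
      have hinner : (inner ℝ (Matrix.toEuclideanLin M x) x : ℝ)
          = ∑ p ∈ Finset.univ ×ˢ Finset.univ, F p := by
        rw [PiLp.inner_apply]
        simp only [RCLike.inner_apply, conj_trivial]
        rw [Finset.sum_product]
        refine Finset.sum_congr rfl fun v _ => ?_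
        have h1 : (Matrix.toEuclideanLin M x) v = ∑ u : V, M v u * x0 u := by
          show (M *ᵥ x0) v = _
          simp [Matrix.mulVec, dotProduct]
        rw [h1, Finset.mul_sum]
        exact Finset.sum_congr rfl fun u _ => by
          show x0 v * (M v u * x0 u) = M v u * x0 u * x0 v
          ring
      -- the two halves
      set P1 : Finset (V × V) := (Finset.univ ×ˢ Finset.univ).filter
        (fun p => f p.1 < f p.2) with hP1
      set P2 : Finset (V × V) := (Finset.univ ×ˢ Finset.univ).filter
        (fun p => f p.2 < f p.1) with hP2
      have hdisj : Disjoint P1 P2 := by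
        rw [Finset.disjoint_left]
        intro p hp1 hp2
        rw [hP1, Finset.mem_filter] at hp1
        rw [hP2, Finset.mem_filter] at hp2
        exact absurd hp2.2 (not_lt.mpr (le_of_lt hp1.2))
      have hswap : ∑ p ∈ P2, F p = ∑ p ∈ P1, F p := by
        refine Finset.sum_bij' (fun p _ => Prod.swap p) (fun p _ => Prod.swap p)
          ?_ ?_ ?_ ?_ ?_
        · intro p hp
          rw [hP2, Finset.mem_filter] at hp
          rw [hP1, Finset.mem_filter]
          exact ⟨by simp, hp.2⟩
        · intro p hp
          rw [hP1, Finset.mem_filter] at hp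
          rw [hP2, Finset.mem_filter]
          exact ⟨by simp, hp.2⟩
        · intro p _; simp
        · intro p _; simp
        · intro p _
          show F p = F p.swap
          rw [hF]
          show M p.1 p.2 * x0 p.2 * x0 p.1 = M p.2 p.1 * x0 p.1 * x0 p.2
          rw [hMsymm p.1 p.2]; ring
      have hsplit : ∑ p ∈ P1, F p + ∑ p ∈ P2, F p ≤ ∑ p ∈ Finset.univ ×ˢ Finset.univ, F p := by
        rw [← Finset.sum_union hdisj]
        refine Finset.sum_le_sum_of_subset_of_nonneg ?_ (fun p _ _ => hF0 p)
        rw [Finset.union_subset_iff]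
        exact ⟨Finset.filter_subset _ _, Finset.filter_subset _ _⟩
      -- lower bound for P1 sum
      have hP1sum : pairSum k (fun i => (a i : ℝ)) ≤ ∑ p ∈ P1, F p := by
        have hsplitP1 : ∑ p ∈ P1, F p
            = ∑ v : V, ∑ u ∈ Finset.univ.filter (fun u => f v < f u), F (v, u) := by
          rw [hP1, Finset.sum_filter, Finset.sum_product]
          exact Finset.sum_congr rfl fun v _ => (Finset.sum_filter _ _).symm
        rw [hsplitP1]
        -- per-vertex bound
        have hper : ∀ v : V, ∑ j ∈ Finset.univ.filter (fun j => f v < j), c (f v) * c j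
            ≤ ∑ u ∈ Finset.univ.filter (fun u => f v < f u), F (v, u) := by
          intro v
          set φ : Fin k → V := fun j => if hj : f v < j then (hadj v j hj).choose else v with hφ
          have hφspec : ∀ j : Fin k, f v < j → f (φ j) = j ∧ G.Adj v (φ j) := by
            intro j hj
            have := (hadj v j hj).choose_spec
            rw [hφ]
            simpa [dif_pos hj] using this
          have hinj : ∀ j1 ∈ Finset.univ.filter (fun j => f v < j),
              ∀ j2 ∈ Finset.univ.filter (fun j => f v < j), φ j1 = φ j2 → j1 = j2 := by
            intro j1 hj1 j2 hj2 he
            have h1 := (hφspec j1 (Finset.mem_filter.mp hj1).2).1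
            have h2 := (hφspec j2 (Finset.mem_filter.mp hj2).2).1
            rw [← h1, ← h2, he]
          have heq : ∑ j ∈ Finset.univ.filter (fun j => f v < j), c (f v) * c j
              = ∑ j ∈ Finset.univ.filter (fun j => f v < j), F (v, φ j) := by
            refine Finset.sum_congr rfl fun j hj => ?_
            have hj' := (Finset.mem_filter.mp hj).2
            obtain ⟨hfj, hadjj⟩ := hφspec j hj'
            show c (f v) * c j = M v (φ j) * x0 (φ j) * x0 v
            have hM1 : M v (φ j) = 1 := by simp [hM, SimpleGraph.adjMatrix_apply, hadjj]
            rw [hM1]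
            show c (f v) * c j = 1 * c (f (φ j)) * c (f v)
            rw [hfj]; ring
          rw [heq, ← Finset.sum_image (f := fun u => F (v, u)) hinj]
          refine Finset.sum_le_sum_of_subset_of_nonneg ?_ (fun p _ _ => hF0 _)
          intro u hu
          rw [Finset.mem_image] at hu
          obtain ⟨j, hj, rfl⟩ := hu
          have hj' := (Finset.mem_filter.mp hj).2
          rw [Finset.mem_filter]
          exact ⟨Finset.mem_univ _, by rw [(hφspec j hj').1]; exact hj'⟩
        -- sum over v of the layer sums equals pairSum
        have hlay : ∑ v : V, ∑ j ∈ Finset.univ.filter (fun j => f v < j), c (f v) * c j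
            = pairSum k (fun i => (a i : ℝ)) := by
          have h1 := hfib (fun i => ∑ j ∈ Finset.univ.filter (fun j => i < j), c i * c j)
          rw [h1]
          rw [pairSum]
          rw [show (Finset.univ : Finset (Fin k × Fin k)) = Finset.univ ×ˢ Finset.univ by
            rw [Finset.univ_product_univ]]
          rw [Finset.sum_filter, Finset.sum_product]
          refine Finset.sum_congr rfl fun i _ => ?_
          rw [Finset.mul_sum, ← Finset.sum_filter]
          refine Finset.sum_congr rfl fun j hj => ?_
          have hij := (Finset.mem_filter.mp hj).2
          show (a i : ℝ) * (c i * c j) = Real.sqrt ((a i : ℝ) / (a j : ℝ))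
          rw [Real.sqrt_div (le_of_lt (hapos i)), hc]
          show (a i : ℝ) * ((Real.sqrt (a i))⁻¹ * (Real.sqrt (a j))⁻¹)
            = Real.sqrt (a i) / Real.sqrt (a j)
          rw [show (a i : ℝ) * ((Real.sqrt (a i))⁻¹ * (Real.sqrt (a j))⁻¹)
            = ((a i : ℝ) / Real.sqrt (a i)) / Real.sqrt (a j) by ring]
          rw [Real.div_sqrt]
        calc pairSum k (fun i => (a i : ℝ))
            = ∑ v : V, ∑ j ∈ Finset.univ.filter (fun j => f v < j), c (f v) * c j := hlay.symm
          _ ≤ ∑ v : V, ∑ u ∈ Finset.univ.filter (fun u => f v < f u), F (v, u) :=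
              Finset.sum_le_sum fun v _ => hper v
      rw [hinner]
      calc 2 * pairSum k (fun i => (a i : ℝ))
          = pairSum k (fun i => (a i : ℝ)) + pairSum k (fun i => (a i : ℝ)) := by ring
        _ ≤ ∑ p ∈ P1, F p + ∑ p ∈ P2, F p := by
            rw [hswap]; exact add_le_add hP1sum hP1sum
        _ ≤ ∑ p ∈ Finset.univ ×ˢ Finset.univ, F p := hsplit
  obtain ⟨x, hxne, hnorm, hfinal⟩ := key
  haveI : Nonempty V := by
    by_contra hcon
    rw [not_nonempty_iff] at hcon
    exact hxne (Subsingleton.elim x 0)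
  have hray := rayleigh_le_lambda1 G x hxne
  rw [hnorm] at hray
  have hkpos : (0 : ℝ) < k := by exact_mod_cast hk
  calc (2 / (k : ℝ)) * pairSum k (fun i => (a i : ℝ))
      = (2 * pairSum k (fun i => (a i : ℝ))) / (k : ℝ) := by ring
    _ ≤ (inner ℝ (Matrix.toEuclideanLin (G.adjMatrix ℝ) x) x : ℝ) / (k : ℝ) := by
        exact (div_le_div_iff_of_pos_right hkpos).mpr hfinal
    _ ≤ lambda1 G := hray
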